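/- Let V be a finite-dimensional real vector space, D ⊆ V ⊕ V* a maximally isotropic subspace, and S ⊆ V ⊕ V* an isotropic subspace. Then D^S := (D ∩ S⊥) + S is maximally isotropic: (D^S)⊥ = D^S. -/

import Mathlib

/-- The orthogonal complement of a subspace `E ⊆ V ⊕ V*` with respect to the canonical
symmetric pairing `⟨(X,ξ),(Y,ζ)⟩ = ζ(X) + ξ(Y)`. -/
def perp {V : Type*} [AddCommGroup V] [Module ℝ V]
    (E : Submodule ℝ (V × Module.Dual ℝ V)) :
    Submodule ℝ (V × Module.Dual ℝ V) where
  carrier := {p | ∀ q ∈ E, q.2 p.1 + p.2 q.1 = 0}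
  add_mem' := by
    intro a b ha hb q hq
    have h1 := ha q hq
    have h2 := hb q hq
    simp only [Prod.fst_add, Prod.snd_add, map_add, LinearMap.add_apply]
    linarith
  zero_mem' := by
    intro q hq
    simp
  smul_mem' := by
    intro c a ha q hq
    have h := ha q hq
    simp only [Prod.smul_fst, Prod.smul_snd, map_smul, LinearMap.smul_apply, smul_eq_mul]
    rw [← mul_add, h, mul_zero]


section CanBAux
variable {V : Type*} [AddCommGroup V] [Module ℝ V]

/-- The canonical pairing as a bilinear form. -/
noncomputable def canB : LinearMap.BilinForm ℝ (V × Module.Dual ℝ V) :=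
  LinearMap.mk₂ ℝ (fun p q => p.2 q.1 + q.2 p.1)
    (by intro a b c; simp; ring)
    (by intro a b c; simp; ring)
    (by intro a b c; simp; ring)
    (by intro a b c; simp; ring)

lemma canB_apply (p q : V × Module.Dual ℝ V) : canB p q = p.2 q.1 + q.2 p.1 := rfl

lemma canB_isRefl : (canB (V := V)).IsRefl := by
  intro p q h
  rw [canB_apply] at h ⊢; linarith

variable (E : Submodule ℝ (V × Module.Dual ℝ V))

lemma perp_eq_orthogonal : perp E = canB.orthogonal E := by
  ext p
  constructor
  · intro hp q hq
    have := hp q hq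
    rw [canB_apply]; linarith
  · intro hp q hq
    have := hp q hq
    rw [canB_apply] at this; linarith

lemma canB_nondeg [FiniteDimensional ℝ V] : (canB (V := V)).Nondegenerate := by
  refine (LinearMap.IsRefl.nondegenerate_iff_separatingLeft (B := canB (V := V)) (fun p q h => canB_isRefl p q h)).mpr ?_
  intro p hp
  have h1 : p.2 = 0 := by
    ext x
    have := hp (x, 0)
    rw [canB_apply] at this
    simpa using this
  have h2 : p.1 = 0 := by
    rw [← Module.forall_dual_apply_eq_zero_iff ℝ]
    intro φ
    have := hp (0, φ)
    rw [canB_apply, h1] at this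
    simpa using this
  exact Prod.ext h2 h1

lemma perp_perp [FiniteDimensional ℝ V] : perp (perp E) = E := by
  rw [perp_eq_orthogonal, perp_eq_orthogonal,
    LinearMap.BilinForm.orthogonal_orthogonal canB_nondeg canB_isRefl]

lemma perp_sup (F : Submodule ℝ (V × Module.Dual ℝ V)) :
    perp (E ⊔ F) = perp E ⊓ perp F := by
  apply le_antisymm
  · exact le_inf (fun p hp q hq => hp q (Submodule.mem_sup_left hq))
      (fun p hp q hq => hp q (Submodule.mem_sup_right hq))
  · intro p hp q hq
    obtain ⟨a, ha, b, hb, rfl⟩ := Submodule.mem_sup.mp hq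
    have h1 := hp.1 a ha
    have h2 := hp.2 b hb
    simp only [Prod.fst_add, Prod.snd_add, map_add, LinearMap.add_apply]
    linarith

end CanBAux

/-- Let `V` be a finite-dimensional real vector space,
`D ⊆ V ⊕ V*` a maximally isotropic subspace, and `S ⊆ V ⊕ V*` an isotropic subspace.
Then `D^S := (D ∩ S⊥) + S` is maximally isotropic: `(D^S)⊥ = D^S`. -/
theorem stmt_6 {V : Type*} [AddCommGroup V] [Module ℝ V] [FiniteDimensional ℝ V]
    (D S : Submodule ℝ (V × Module.Dual ℝ V))
    (hD : perp D = D) (hS : S ≤ perp S) :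
    perp ((D ⊓ perp S) ⊔ S) = (D ⊓ perp S) ⊔ S := by
  have key : D ⊓ perp S = perp (D ⊔ S) := by
    rw [perp_sup, hD]
  rw [perp_sup, key, perp_perp]
  apply le_antisymm
  · -- (D ⊔ S) ⊓ perp S ≤ (perp (D ⊔ S)) ⊔ S
    intro x hx
    obtain ⟨hx1, hx2⟩ := hx
    obtain ⟨d, hd, s, hs, rfl⟩ := Submodule.mem_sup.mp hx1
    have hdperp : d ∈ perp S := by
      have : d = (d + s) - s := by abel
      rw [this]
      exact Submodule.sub_mem _ hx2 (hS hs)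
    have hdmem : d ∈ perp (D ⊔ S) := by
      rw [← key]; exact ⟨hd, hdperp⟩
    exact Submodule.add_mem _ (Submodule.mem_sup_left hdmem) (Submodule.mem_sup_right hs)
  · -- (perp (D ⊔ S)) ⊔ S ≤ (D ⊔ S) ⊓ perp S
    apply sup_le
    · rw [← key]
      exact le_inf (inf_le_left.trans le_sup_left) inf_le_right
    · exact le_inf le_sup_right hS
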